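/- arXiv:1709.02087 — 6 statements merged into one kernel-verified Lean document; each statement's English description precedes it below -/
import Mathlib

section
/- If F_3(p) = F_2(p)^2, then p is the uniform distribution on its support, i.e., p_i = F_2(p) for every i with p_i > 0. -/
/-- If `F₃(p) = F₂(p)²`, then `p` is uniform on its support:
`p_i = F₂(p)` for every `i` with `p_i > 0`. -/
theorem stmt2 {Ω : Type*} [Fintype Ω] (p : Ω → ℝ)
    (hp : ∀ i, 0 ≤ p i) (hsum : ∑ i, p i = 1)
    (hF : ∑ i, p i ^ 3 = (∑ i, p i ^ 2) ^ 2) :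
    ∀ i, 0 < p i → p i = ∑ j, p j ^ 2 := by
  set F := ∑ j, p j ^ 2 with hFdef
  have key : ∑ i, p i * (p i - F) ^ 2 = 0 := by
    have : ∑ i, p i * (p i - F) ^ 2
        = ∑ i, (p i ^ 3 - 2 * F * p i ^ 2 + F ^ 2 * p i) := by
      apply Finset.sum_congr rfl; intro i _; ring
    rw [this, Finset.sum_add_distrib, Finset.sum_sub_distrib,
      ← Finset.mul_sum, ← Finset.mul_sum, hsum, hF]
    ring
  intro i hi
  have hterm : ∀ j ∈ Finset.univ, 0 ≤ p j * (p j - F) ^ 2 := fun j _ =>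
    mul_nonneg (hp j) (sq_nonneg _)
  have hz := (Finset.sum_eq_zero_iff_of_nonneg hterm).mp key i (Finset.mem_univ i)
  rcases mul_eq_zero.mp hz with h | h
  · exact absurd h hi.ne'
  · have := pow_eq_zero_iff (n := 2) (by norm_num) |>.mp h
    linarith
end

section
/- Let p be a probability distribution on a finite set Ω and let x ∈ [0,1]. If ∑_{i∈Ω} min(p_i, |x − p_i|) = δ, then there exists a nonempty subset S ⊆ Ω (namely S = {i : p_i > x/2}) such that the total variation distance between p and the uniform distribution on S is at most 2δ (equivalently ‖p − u_S‖_1 ≤ 2δ). Consequently, if d_TV(p, u_T) ≥ ε for every nonempty subset T ⊆ Ω, then ∑_i min(p_i, |x − p_i|) ≥ ε/2 for all x ∈ [0,1]. -/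
/-- If `∑ min(p_i, |x − p_i|) = δ` for `x ∈ [0,1]`, there is a nonempty `S` with
`‖p − u_S‖₁ ≤ 2δ`; consequently, if `p` is `ε`-far in total variation from every
uniform distribution on a nonempty subset, then `∑ min(p_i, |x − p_i|) ≥ ε/2`. -/
theorem stmt3 {Ω : Type*} [Fintype Ω] [DecidableEq Ω] [Nonempty Ω] (p : Ω → ℝ)
    (hp : ∀ i, 0 ≤ p i) (hsum : ∑ i, p i = 1)
    (x : ℝ) (hx : x ∈ Set.Icc (0 : ℝ) 1) (δ ε : ℝ)
    (hδ : δ = ∑ i, min (p i) |x - p i|) :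
    (∃ S : Finset Ω, S.Nonempty ∧
        ∑ i, |p i - (if i ∈ S then (1 : ℝ) / S.card else 0)| ≤ 2 * δ) ∧
      ((∀ T : Finset Ω, T.Nonempty →
          ε ≤ (1 / 2) * ∑ i, |p i - (if i ∈ T then (1 : ℝ) / T.card else 0)|) →
        ε / 2 ≤ ∑ i, min (p i) |x - p i|) := by
  obtain ⟨hx0, hx1⟩ := hx
  have hδ0 : 0 ≤ δ := by
    rw [hδ]; exact Finset.sum_nonneg fun i _ => le_min (hp i) (abs_nonneg _)
  have main : ∃ S : Finset Ω, S.Nonempty ∧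
      ∑ i, |p i - (if i ∈ S then (1 : ℝ) / S.card else 0)| ≤ 2 * δ := by
    by_cases hS : (Finset.univ.filter (fun i => x / 2 < p i)).Nonempty
    · set S := Finset.univ.filter (fun i => x / 2 < p i) with hSdef
      refine ⟨S, hS, ?_⟩
      set c : Ω → ℝ := fun i => if i ∈ S then x else 0 with hc
      have hδeq : δ = ∑ i, |p i - c i| := by
        rw [hδ]
        apply Finset.sum_congr rfl
        intro i _
        by_cases hi : i ∈ S
        · have h2 : x / 2 < p i := by simpa [hSdef] using hi
          have hle : |x - p i| ≤ p i := by
            rw [abs_sub_le_iff]; constructor <;> linarith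
          rw [min_eq_right hle]
          simp [hc, hi, abs_sub_comm]
        · have h2 : ¬ x / 2 < p i := by simpa [hSdef] using hi
          push_neg at h2
          have hle : p i ≤ |x - p i| := by
            rw [abs_of_nonneg (by linarith)]; linarith
          rw [min_eq_left hle]
          simp [hc, hi, abs_of_nonneg (hp i)]
      have hcard : (0 : ℝ) < S.card := by exact_mod_cast Finset.card_pos.mpr hS
      have hsumc : ∑ i, c i = S.card * x := by
        simp [hc, Finset.sum_ite_mem, mul_comm]
      have hdiff : ∑ i, (p i - c i) = 1 - S.card * x := by
        rw [Finset.sum_sub_distrib, hsum, hsumc]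
      have h1 : |1 - (S.card : ℝ) * x| ≤ δ := by
        rw [hδeq, ← hdiff]
        exact Finset.abs_sum_le_sum_abs _ _
      have h2 : ∑ i, |c i - (if i ∈ S then (1 : ℝ) / S.card else 0)|
          = |1 - (S.card : ℝ) * x| := by
        have hterm : ∀ i, |c i - (if i ∈ S then (1 : ℝ) / S.card else 0)| =
            if i ∈ S then |x - 1 / S.card| else 0 := by
          intro i; by_cases hi : i ∈ S <;> simp [hc, hi]
        rw [Finset.sum_congr rfl fun i _ => hterm i]
        rw [Finset.sum_ite_mem, Finset.univ_inter, Finset.sum_const, nsmul_eq_mul]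
        rw [abs_sub_comm (1 : ℝ)]
        rw [← abs_of_pos hcard, ← abs_mul]
        congr 1
        field_simp
        rw [abs_of_pos hcard]
      calc ∑ i, |p i - (if i ∈ S then (1 : ℝ) / S.card else 0)|
          ≤ ∑ i, (|p i - c i| + |c i - (if i ∈ S then (1 : ℝ) / S.card else 0)|) := by
            apply Finset.sum_le_sum; intro i _
            calc |p i - (if i ∈ S then (1 : ℝ) / S.card else 0)|
                = |(p i - c i) + (c i - (if i ∈ S then (1 : ℝ) / S.card else 0))| := by
                  ring_nf
              _ ≤ _ := abs_add_le _ _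
        _ = δ + |1 - (S.card : ℝ) * x| := by
            rw [Finset.sum_add_distrib, ← hδeq, h2]
        _ ≤ 2 * δ := by linarith
    · have hall : ∀ i, p i ≤ x / 2 := by
        intro i
        by_contra h
        push_neg at h
        exact hS ⟨i, Finset.mem_filter.mpr ⟨Finset.mem_univ i, h⟩⟩
      have hδ1 : δ = 1 := by
        rw [hδ, ← hsum]
        apply Finset.sum_congr rfl
        intro i _
        have h1 := hall i; have h2 := hp i
        rw [min_eq_left]
        rw [abs_of_nonneg (by linarith)]; linarith
      obtain ⟨i0⟩ := ‹Nonempty Ω›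
      refine ⟨{i0}, Finset.singleton_nonempty i0, ?_⟩
      have hle : ∀ i, |p i - (if i ∈ ({i0} : Finset Ω) then (1 : ℝ) / ({i0} : Finset Ω).card else 0)|
          ≤ p i + (if i ∈ ({i0} : Finset Ω) then (1 : ℝ) / ({i0} : Finset Ω).card else 0) := by
        intro i
        have hq : (0 : ℝ) ≤ (if i ∈ ({i0} : Finset Ω) then (1 : ℝ) / ({i0} : Finset Ω).card else 0) := by
          positivity
        calc |p i - _| ≤ |p i| + |(if i ∈ ({i0} : Finset Ω) then (1 : ℝ) / ({i0} : Finset Ω).card else 0)| :=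
              abs_sub _ _
          _ = _ := by rw [abs_of_nonneg (hp i), abs_of_nonneg hq]
      calc ∑ i, |p i - (if i ∈ ({i0} : Finset Ω) then (1 : ℝ) / ({i0} : Finset Ω).card else 0)|
          ≤ ∑ i, (p i + (if i ∈ ({i0} : Finset Ω) then (1 : ℝ) / ({i0} : Finset Ω).card else 0)) :=
            Finset.sum_le_sum fun i _ => hle i
        _ = 2 * δ := by
            rw [Finset.sum_add_distrib, hsum, hδ1]
            simp [Finset.sum_ite_mem]
            norm_num
  refine ⟨main, ?_⟩
  intro hT
  obtain ⟨S, hSne, hSle⟩ := main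
  have hε := hT S hSne
  rw [← hδ]
  linarith
end

section
/- Let p be a probability distribution on a finite set Ω such that d_TV(p, u_S) ≥ ε for every nonempty subset S ⊆ Ω, where 0 < ε ≤ 1. Then F_3(p) − F_2(p)^2 ≥ ε^2 F_2(p)^2 / 64. -/
/-- If `p` is `ε`-far in total variation from every uniform distribution on a
nonempty subset, then `F₃(p) − F₂(p)² ≥ ε² F₂(p)² / 64`. -/
theorem stmt4 {Ω : Type*} [Fintype Ω] [DecidableEq Ω] (p : Ω → ℝ)
    (hp : ∀ i, 0 ≤ p i) (hsum : ∑ i, p i = 1)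
    (ε : ℝ) (hε : 0 < ε) (hε1 : ε ≤ 1)
    (hfar : ∀ S : Finset Ω, S.Nonempty →
      ε ≤ (1 / 2) * ∑ i, |p i - (if i ∈ S then (1 : ℝ) / S.card else 0)|) :
    ε ^ 2 * (∑ i, p i ^ 2) ^ 2 / 64 ≤ ∑ i, p i ^ 3 - (∑ i, p i ^ 2) ^ 2 := by
  classical
  set F2 : ℝ := ∑ i, p i ^ 2 with hF2
  -- F2 > 0
  have hF2pos : 0 < F2 := by
    obtain ⟨i, hi⟩ : ∃ i, 0 < p i := by
      by_contra h
      push_neg at h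
      have : ∑ i, p i ≤ 0 := Finset.sum_nonpos (fun i _ => h i)
      linarith
    have h1 : p i ^ 2 ≤ F2 :=
      Finset.single_le_sum (f := fun j => p j ^ 2) (fun j _ => sq_nonneg _) (Finset.mem_univ i)
    nlinarith
  set T : Finset Ω := Finset.univ.filter (fun i => F2 / 2 ≤ p i) with hTdef
  have hmemT : ∀ i, i ∈ T ↔ F2 / 2 ≤ p i := by
    intro i; simp [hTdef]
  have hTne : T.Nonempty := by
    by_contra h
    rw [Finset.not_nonempty_iff_eq_empty, Finset.filter_eq_empty_iff] at h
    push_neg at h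
    have hle : F2 ≤ F2 / 2 := by
      calc F2 = ∑ i, p i ^ 2 := rfl
        _ ≤ ∑ i, p i * (F2 / 2) := by
            refine Finset.sum_le_sum (fun i _ => ?_)
            have := h (Finset.mem_univ i)
            nlinarith [hp i]
        _ = F2 / 2 := by rw [← Finset.sum_mul, hsum, one_mul]
    linarith
  set t : ℝ := (T.card : ℝ) with ht
  have htpos : 0 < t := by
    have h0 : 0 < T.card := Finset.card_pos.mpr hTne
    rw [ht]
    exact_mod_cast h0
  -- split the TV sum
  have hsplit : ∑ i, |p i - (if i ∈ T then (1 : ℝ) / T.card else 0)|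
      = ∑ i ∈ T, |p i - 1 / t| + ∑ i ∈ Tᶜ, p i := by
    rw [← Finset.sum_add_sum_compl T]
    congr 1
    · exact Finset.sum_congr rfl (fun i hi => by rw [if_pos hi])
    · refine Finset.sum_congr rfl (fun i hi => ?_)
      rw [if_neg (Finset.mem_compl.mp hi), sub_zero, abs_of_nonneg (hp i)]
  have hcomp_sum : ∑ i ∈ T, p i + ∑ i ∈ Tᶜ, p i = 1 := by
    rw [Finset.sum_add_sum_compl, hsum]
  have hcomp_nonneg : 0 ≤ ∑ i ∈ Tᶜ, p i := Finset.sum_nonneg (fun i _ => hp i)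
  -- triangle inequality step
  have h1 : ∑ i ∈ T, |p i - 1 / t| ≤ (∑ i ∈ T, |p i - F2|) + t * |F2 - 1 / t| := by
    calc ∑ i ∈ T, |p i - 1 / t| ≤ ∑ i ∈ T, (|p i - F2| + |F2 - 1 / t|) :=
          Finset.sum_le_sum (fun i _ => abs_sub_le (p i) F2 (1 / t))
      _ = (∑ i ∈ T, |p i - F2|) + t * |F2 - 1 / t| := by
          rw [Finset.sum_add_distrib, Finset.sum_const, nsmul_eq_mul]
  have h2 : t * |F2 - 1 / t| = |t * F2 - 1| := by
    rw [show t * F2 - 1 = t * (F2 - 1 / t) from by field_simp, abs_mul,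
      abs_of_pos htpos]
  have h3 : |t * F2 - 1| ≤ (∑ i ∈ T, |p i - F2|) + ∑ i ∈ Tᶜ, p i := by
    have he : t * F2 - 1 = (∑ i ∈ T, (F2 - p i)) - ∑ i ∈ Tᶜ, p i := by
      rw [Finset.sum_sub_distrib, Finset.sum_const, nsmul_eq_mul]
      linarith [hcomp_sum]
    rw [he]
    calc |(∑ i ∈ T, (F2 - p i)) - ∑ i ∈ Tᶜ, p i|
        ≤ |∑ i ∈ T, (F2 - p i)| + |∑ i ∈ Tᶜ, p i| := abs_sub _ _
      _ ≤ (∑ i ∈ T, |F2 - p i|) + ∑ i ∈ Tᶜ, p i := by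
          gcongr
          · exact Finset.abs_sum_le_sum_abs _ _
          · rw [abs_of_nonneg hcomp_nonneg]
      _ = (∑ i ∈ T, |p i - F2|) + ∑ i ∈ Tᶜ, p i := by
          congr 1
          exact Finset.sum_congr rfl (fun i _ => abs_sub_comm _ _)
  -- so ε ≤ M' := ∑_T |p−F2| + ∑_{Tᶜ} p
  have hεM : ε ≤ (∑ i ∈ T, |p i - F2|) + ∑ i ∈ Tᶜ, p i := by
    have := hfar T hTne
    rw [hsplit] at this
    linarith
  -- bound M' * F2 ≤ 2 * C where C = ∑ p |p−F2|
  set C : ℝ := ∑ i, p i * |p i - F2| with hC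
  have hC_split : C = (∑ i ∈ T, p i * |p i - F2|) + ∑ i ∈ Tᶜ, p i * |p i - F2| := by
    rw [hC, ← Finset.sum_add_sum_compl T]
  have hMC : ((∑ i ∈ T, |p i - F2|) + ∑ i ∈ Tᶜ, p i) * F2 ≤ 2 * C := by
    rw [hC_split]
    have hA : (∑ i ∈ T, |p i - F2|) * F2 ≤ 2 * ∑ i ∈ T, p i * |p i - F2| := by
      rw [Finset.sum_mul, Finset.mul_sum]
      refine Finset.sum_le_sum (fun i hi => ?_)
      have h2p : F2 / 2 ≤ p i := (hmemT i).mp hi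
      nlinarith [abs_nonneg (p i - F2)]
    have hB : (∑ i ∈ Tᶜ, p i) * F2 ≤ 2 * ∑ i ∈ Tᶜ, p i * |p i - F2| := by
      rw [Finset.sum_mul, Finset.mul_sum]
      refine Finset.sum_le_sum (fun i hi => ?_)
      have h2p : ¬ (F2 / 2 ≤ p i) := by
        have := Finset.mem_compl.mp hi
        simpa [hmemT i] using this
      push_neg at h2p
      have habs : |p i - F2| = F2 - p i := by
        rw [abs_of_nonpos (by linarith)]; ring
      rw [habs]
      nlinarith [hp i]
    linarith
  -- Cauchy-Schwarz
  set Q : ℝ := ∑ i, p i * (p i - F2) ^ 2 with hQ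
  have hCQ : C ^ 2 ≤ Q := by
    have hcs := Finset.sum_mul_sq_le_sq_mul_sq Finset.univ
      (fun i => Real.sqrt (p i)) (fun i => Real.sqrt (p i) * |p i - F2|)
    have e1 : ∑ i, Real.sqrt (p i) * (Real.sqrt (p i) * |p i - F2|) = C := by
      refine Finset.sum_congr rfl (fun i _ => ?_)
      rw [← mul_assoc, Real.mul_self_sqrt (hp i)]
    have e2 : ∑ i, Real.sqrt (p i) ^ 2 = 1 := by
      rw [← hsum]
      exact Finset.sum_congr rfl (fun i _ => Real.sq_sqrt (hp i))
    have e3 : ∑ i, (Real.sqrt (p i) * |p i - F2|) ^ 2 = Q := by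
      refine Finset.sum_congr rfl (fun i _ => ?_)
      rw [mul_pow, Real.sq_sqrt (hp i), sq_abs]
    rw [e1, e2, e3, one_mul] at hcs
    exact hcs
  -- identity Q = F3 - F2^2
  have hQid : Q = (∑ i, p i ^ 3) - F2 ^ 2 := by
    have e : Q = ∑ i, (p i ^ 3 - 2 * F2 * p i ^ 2 + F2 ^ 2 * p i) := by
      refine Finset.sum_congr rfl (fun i _ => ?_)
      ring
    rw [e, Finset.sum_add_distrib, Finset.sum_sub_distrib, ← Finset.mul_sum,
      ← Finset.mul_sum, hsum, ← hF2]
    ring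
  -- conclude
  have hC0 : 0 ≤ C := Finset.sum_nonneg (fun i _ => mul_nonneg (hp i) (abs_nonneg _))
  have hεF2 : ε * F2 ≤ 2 * C := by
    calc ε * F2 ≤ ((∑ i ∈ T, |p i - F2|) + ∑ i ∈ Tᶜ, p i) * F2 := by
          exact mul_le_mul_of_nonneg_right hεM (le_of_lt hF2pos)
      _ ≤ 2 * C := hMC
  rw [← hQid]
  nlinarith [sq_nonneg (ε * F2), mul_pos hε hF2pos]
end

section
/- Let p be a probability distribution on a finite set Ω, let x = F_2(p), and let S_l = {i : p_i < x/2}. If ∑_{i∈S_l} p_i ≥ ε/4, then F_3(p) − F_2(p)^2 ≥ ε F_2(p)^2 / 16. -/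
/-- If `x = F₂(p)`, `S_l = {i : p_i < x/2}` and `∑_{i∈S_l} p_i ≥ ε/4`, then
`F₃(p) − F₂(p)² ≥ ε F₂(p)² / 16`. -/
theorem stmt7 {Ω : Type*} [Fintype Ω] (p : Ω → ℝ)
    (hp : ∀ i, 0 ≤ p i) (hsum : ∑ i, p i = 1)
    (x ε : ℝ) (hε : 0 < ε) (hx : x = ∑ j, p j ^ 2)
    (hl : ε / 4 ≤ ∑ i ∈ Finset.univ.filter fun i => p i < x / 2, p i) :
    ε * (∑ i, p i ^ 2) ^ 2 / 16 ≤ ∑ i, p i ^ 3 - (∑ i, p i ^ 2) ^ 2 := by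
  set S := Finset.univ.filter fun i => p i < x / 2 with hS
  have hx0 : 0 ≤ x := by
    rw [hx]; exact Finset.sum_nonneg fun i _ => sq_nonneg _
  have hid : ∑ i, p i * (p i - x) ^ 2 = ∑ i, p i ^ 3 - (∑ i, p i ^ 2) ^ 2 := by
    have : ∀ i, p i * (p i - x) ^ 2 = p i ^ 3 - 2 * x * p i ^ 2 + x ^ 2 * p i := by
      intro i; ring
    simp only [this, Finset.sum_add_distrib, Finset.sum_sub_distrib,
      ← Finset.mul_sum, hsum, ← hx]
    ring
  rw [← hid, ← hx]
  have h1 : ∑ i ∈ S, p i * (x / 2) ^ 2 ≤ ∑ i ∈ S, p i * (p i - x) ^ 2 := by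
    apply Finset.sum_le_sum
    intro i hi
    have hpi : p i < x / 2 := (Finset.mem_filter.mp hi).2
    have : (x / 2) ^ 2 ≤ (p i - x) ^ 2 := by
      nlinarith [hp i]
    nlinarith [hp i]
  have h2 : ∑ i ∈ S, p i * (p i - x) ^ 2 ≤ ∑ i, p i * (p i - x) ^ 2 := by
    apply Finset.sum_le_sum_of_subset_of_nonneg (Finset.subset_univ S)
    intro i _ _
    exact mul_nonneg (hp i) (sq_nonneg _)
  have h3 : ε / 4 * (x / 2) ^ 2 ≤ ∑ i ∈ S, p i * (x / 2) ^ 2 := by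
    rw [← Finset.sum_mul]
    exact mul_le_mul_of_nonneg_right hl (sq_nonneg _)
  nlinarith
end

section
/- Let X_1, ..., X_m be independent nonnegative real-valued random variables and X = ∑_{j=1}^m X_j. Then for any t > 0, Pr[X ≤ E[X] − t] ≤ exp(−t^2 / (2 ∑_{j=1}^m E[X_j^2])). -/
open MeasureTheory
open Real ProbabilityTheory

lemma exp_neg_le_quad {u : ℝ} (hu : 0 ≤ u) :
    Real.exp (-u) ≤ 1 - u + u ^ 2 / 2 := by
  have hmono : Monotone (fun u : ℝ => 1 - u + u ^ 2 / 2 - Real.exp (-u)) := by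
    have hder : ∀ x : ℝ, HasDerivAt (fun u : ℝ => 1 - u + u ^ 2 / 2 - Real.exp (-u))
        (x + Real.exp (-x) - 1) x := by
      intro x
      have h1 : HasDerivAt (fun u : ℝ => Real.exp (-u)) (Real.exp (-x) * (-1)) x :=
        (Real.hasDerivAt_exp (-x)).comp x (hasDerivAt_neg x)
      have h2 : HasDerivAt (fun u : ℝ => 1 - u + u ^ 2 / 2)
          (0 - 1 + (2 : ℕ) * x ^ (2 - 1) / 2) x :=
        ((hasDerivAt_const x (1:ℝ)).sub (hasDerivAt_id x)).add ((hasDerivAt_pow 2 x).div_const 2)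
      have := h2.sub h1
      refine this.congr_deriv ?_
      push_cast
      ring
    have hdiff : Differentiable ℝ (fun u : ℝ => 1 - u + u ^ 2 / 2 - Real.exp (-u)) :=
      fun x => (hder x).differentiableAt
    refine monotone_of_deriv_nonneg hdiff ?_
    intro x
    rw [(hder x).deriv]
    have := Real.add_one_le_exp (-x)
    linarith
  have h0 := hmono hu
  simp only [neg_zero, Real.exp_zero] at h0
  norm_num at h0
  linarith

lemma mgf_neg_le {Ω : Type*} [MeasurableSpace Ω] (μ : Measure Ω) [IsProbabilityMeasure μ]
    (Y : Ω → ℝ) (hmeas : Measurable Y) (hnn : ∀ ω, 0 ≤ Y ω) (hL2 : MemLp Y 2 μ)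
    {s : ℝ} (hs : 0 ≤ s) :
    mgf Y μ (-s) ≤ Real.exp (-(s * ∫ ω, Y ω ∂μ) + s ^ 2 / 2 * ∫ ω, (Y ω) ^ 2 ∂μ) := by
  have hY1 : Integrable Y μ := hL2.integrable (by norm_num)
  have hY2 : Integrable (fun ω => (Y ω) ^ 2) μ := hL2.integrable_sq
  have hint : Integrable (fun ω => 1 - s * Y ω + s ^ 2 / 2 * (Y ω) ^ 2) μ := by
    exact ((integrable_const 1).sub (hY1.const_mul s)).add (hY2.const_mul (s ^ 2 / 2))
  have hexp : Integrable (fun ω => Real.exp (-s * Y ω)) μ := by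
    refine Integrable.mono' (integrable_const 1) ((hmeas.const_mul (-s)).exp.aestronglyMeasurable)
      (Filter.Eventually.of_forall fun ω => ?_)
    rw [Real.norm_eq_abs, abs_of_pos (Real.exp_pos _)]
    exact Real.exp_le_one_iff.2 (mul_nonpos_of_nonpos_of_nonneg (neg_nonpos.2 hs) (hnn ω))
  have step1 : mgf Y μ (-s) ≤ ∫ ω, (1 - s * Y ω + s ^ 2 / 2 * (Y ω) ^ 2) ∂μ := by
    refine integral_mono hexp hint fun ω => ?_
    have := exp_neg_le_quad (mul_nonneg hs (hnn ω))
    calc Real.exp (-s * Y ω) = Real.exp (-(s * Y ω)) := by ring_nf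
      _ ≤ 1 - s * Y ω + (s * Y ω) ^ 2 / 2 := this
      _ = 1 - s * Y ω + s ^ 2 / 2 * (Y ω) ^ 2 := by ring
  have step2 : ∫ ω, (1 - s * Y ω + s ^ 2 / 2 * (Y ω) ^ 2) ∂μ
      = 1 - s * ∫ ω, Y ω ∂μ + s ^ 2 / 2 * ∫ ω, (Y ω) ^ 2 ∂μ := by
    have hf : Integrable (fun ω => 1 - s * Y ω) μ := by
      exact (integrable_const 1).sub (hY1.const_mul s)
    rw [integral_add hf (hY2.const_mul (s ^ 2 / 2)),
      integral_sub (integrable_const 1) (hY1.const_mul s), integral_const,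
      integral_const_mul, integral_const_mul]
    simp
  rw [step2] at step1
  refine step1.trans ?_
  have := Real.add_one_le_exp (-(s * ∫ ω, Y ω ∂μ) + s ^ 2 / 2 * ∫ ω, (Y ω) ^ 2 ∂μ)
  linarith

/-- Lower-tail bound for sums of independent nonnegative random variables:
`Pr[X ≤ E[X] − t] ≤ exp(−t² / (2 ∑ E[X_j²]))`. -/
theorem stmt9 {Ω : Type*} [MeasurableSpace Ω] (μ : Measure Ω) [IsProbabilityMeasure μ]
    (m : ℕ) (X : Fin m → Ω → ℝ)
    (hmeas : ∀ j, Measurable (X j))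
    (hnn : ∀ j ω, 0 ≤ X j ω)
    (hL2 : ∀ j, MeasureTheory.MemLp (X j) 2 μ)
    (hind : ProbabilityTheory.iIndepFun X μ)
    (t : ℝ) (ht : 0 < t) :
    μ {ω | ∑ j, X j ω ≤ (∑ j, ∫ ω, X j ω ∂μ) - t}
      ≤ ENNReal.ofReal
          (Real.exp (-t ^ 2 / (2 * ∑ j, ∫ ω, (X j ω) ^ 2 ∂μ))) := by
  set M : ℝ := ∑ j, ∫ ω, X j ω ∂μ with hM
  set V : ℝ := ∑ j, ∫ ω, (X j ω) ^ 2 ∂μ with hV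
  have hVnn : 0 ≤ V := Finset.sum_nonneg fun j _ =>
    integral_nonneg fun ω => sq_nonneg _
  rcases eq_or_lt_of_le hVnn with hV0 | hVpos
  · rw [← hV0]
    norm_num
    exact prob_le_one
  set s : ℝ := t / V with hs
  have hspos : 0 < s := div_pos ht hVpos
  have hexpj : ∀ j, Integrable (fun ω => Real.exp (-s * X j ω)) μ := by
    intro j
    refine Integrable.mono' (integrable_const 1)
      (((hmeas j).const_mul (-s)).exp.aestronglyMeasurable)
      (Filter.Eventually.of_forall fun ω => ?_)
    rw [Real.norm_eq_abs, abs_of_pos (Real.exp_pos _)]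
    exact Real.exp_le_one_iff.2
      (mul_nonpos_of_nonpos_of_nonneg (neg_nonpos.2 hspos.le) (hnn j ω))
  have hintsum : Integrable (fun ω => Real.exp (-s * (∑ j, X j) ω)) μ :=
    hind.integrable_exp_mul_sum hmeas fun j _ => hexpj j
  have chern := measure_le_le_exp_mul_mgf (μ := μ) (X := ∑ j, X j) (M - t)
    (neg_nonpos.2 hspos.le) hintsum
  have hmgfsum : mgf (∑ j, X j) μ (-s) = ∏ j, mgf (X j) μ (-s) :=
    hind.mgf_sum hmeas Finset.univ
  have hprod : ∏ j, mgf (X j) μ (-s) ≤ Real.exp (-(s * M) + s ^ 2 / 2 * V) := by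
    calc ∏ j, mgf (X j) μ (-s)
        ≤ ∏ j, Real.exp (-(s * ∫ ω, X j ω ∂μ) + s ^ 2 / 2 * ∫ ω, (X j ω) ^ 2 ∂μ) :=
          Finset.prod_le_prod (fun j _ => mgf_nonneg)
            (fun j _ => mgf_neg_le μ (X j) (hmeas j) (hnn j) (hL2 j) hspos.le)
      _ = Real.exp (∑ j, (-(s * ∫ ω, X j ω ∂μ) + s ^ 2 / 2 * ∫ ω, (X j ω) ^ 2 ∂μ)) :=
          (Real.exp_sum _ _).symm
      _ = Real.exp (-(s * M) + s ^ 2 / 2 * V) := by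
          congr 1
          rw [Finset.sum_add_distrib, ← Finset.mul_sum, hM, hV,
            Finset.mul_sum, Finset.sum_neg_distrib, ← Finset.mul_sum]
  have hsetEq : {ω | ∑ j, X j ω ≤ M - t} = {ω | (∑ j, X j) ω ≤ M - t} := by
    ext ω; simp [Finset.sum_apply]
  rw [hsetEq, ENNReal.le_ofReal_iff_toReal_le (measure_ne_top μ _) (Real.exp_pos _).le]
  calc (μ {ω | (∑ j, X j) ω ≤ M - t}).toReal
      ≤ Real.exp (-(-s) * (M - t)) * mgf (∑ j, X j) μ (-s) := chern
    _ ≤ Real.exp (s * (M - t)) * Real.exp (-(s * M) + s ^ 2 / 2 * V) := by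
        rw [neg_neg, hmgfsum]
        exact mul_le_mul_of_nonneg_left hprod (Real.exp_pos _).le
    _ = Real.exp (s * (M - t) + (-(s * M) + s ^ 2 / 2 * V)) := (Real.exp_add _ _).symm
    _ = Real.exp (-t ^ 2 / (2 * V)) := by
        congr 1
        rw [hs]
        field_simp
        ring
end

section
/- Let p be a probability distribution on a finite set Ω. If p_i ≤ L for all i and d_TV(p, u_S) ≥ ε for every nonempty S ⊆ Ω, then for every x ∈ [0, L], the set S_l = {i : p_i ≤ x/2} and its complement S_h satisfy ∑_{i∈S_l} p_i + ∑_{i∈S_h} |x − p_i| ≥ ε/2, and hence at least one of ∑_{i∈S_l} p_i ≥ ε/4 or ∑_{i∈S_h} |x − p_i| ≥ ε/4 holds. -/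
/-- If `p_i ≤ L` for all `i` and `p` is `ε`-far from every uniform distribution on a
nonempty subset, then for every `x ∈ [0, L]`, with `S_l = {i : p_i ≤ x/2}` and
`S_h = S_lᶜ`, we have `∑_{S_l} p_i + ∑_{S_h} |x − p_i| ≥ ε/2`, hence one of
`∑_{S_l} p_i ≥ ε/4` or `∑_{S_h} |x − p_i| ≥ ε/4` holds. -/
theorem stmt16 {Ω : Type*} [Fintype Ω] [DecidableEq Ω] [Nonempty Ω] (p : Ω → ℝ)
    (hp : ∀ i, 0 ≤ p i) (hsum : ∑ i, p i = 1)
    (L ε : ℝ) (hL0 : 0 < L) (hL1 : L ≤ 1) (hε : 0 < ε) (hε1 : ε ≤ 1)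
    (hbd : ∀ i, p i ≤ L)
    (hfar : ∀ S : Finset Ω, S.Nonempty →
      ε ≤ (1 / 2) * ∑ i, |p i - (if i ∈ S then (1 : ℝ) / S.card else 0)|) :
    ∀ x ∈ Set.Icc (0 : ℝ) L,
      ε / 2 ≤ (∑ i ∈ Finset.univ.filter fun i => p i ≤ x / 2, p i)
          + ∑ i ∈ Finset.univ.filter fun i => ¬ p i ≤ x / 2, |x - p i| ∧
        (ε / 4 ≤ ∑ i ∈ Finset.univ.filter fun i => p i ≤ x / 2, p i ∨
          ε / 4 ≤ ∑ i ∈ Finset.univ.filter fun i => ¬ p i ≤ x / 2, |x - p i|) := by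
  intro x hx
  classical
  -- Key claim: ∑ min(p i, |x - p i|) ≥ ε/2
  have hkey : ε / 2 ≤ ∑ i, min (p i) |x - p i| := by
    set S : Finset Ω := Finset.univ.filter (fun i => |x - p i| ≤ p i) with hSdef
    rcases S.eq_empty_or_nonempty with hSe | hSne
    · have hmin : ∀ i, min (p i) |x - p i| = p i := by
        intro i
        have hni : i ∉ S := hSe ▸ Finset.notMem_empty i
        have hni' : ¬ |x - p i| ≤ p i := by simpa [hSdef] using hni
        exact min_eq_left (le_of_lt (lt_of_not_ge hni'))
      have h1 : ∑ i, min (p i) |x - p i| = 1 := by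
        rw [Finset.sum_congr rfl fun i _ => hmin i, hsum]
      linarith
    · have hk : (0:ℝ) < (S.card : ℝ) := by exact_mod_cast Finset.card_pos.mpr hSne
      set k : ℝ := (S.card : ℝ) with hkdef
      set A := ∑ i ∈ Sᶜ, p i with hA
      set B := ∑ i ∈ S, |x - p i| with hB
      have hA0 : 0 ≤ A := Finset.sum_nonneg fun i _ => hp i
      have hB0 : 0 ≤ B := Finset.sum_nonneg fun i _ => abs_nonneg _
      have hsplit : ∑ i, |p i - (if i ∈ S then (1 : ℝ) / S.card else 0)|
          = (∑ i ∈ S, |p i - 1/k|) + A := by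
        rw [← Finset.sum_add_sum_compl S]
        congr 1
        · exact Finset.sum_congr rfl fun i hi => by rw [if_pos hi, hkdef]
        · exact Finset.sum_congr rfl fun i hi => by
            rw [if_neg (Finset.mem_compl.mp hi), sub_zero, abs_of_nonneg (hp i)]
      have hsumS : (∑ i ∈ S, p i) + A = 1 := by
        rw [hA, Finset.sum_add_sum_compl S, hsum]
      -- |k x - 1| ≤ B + A
      have habsum : |∑ i ∈ S, (x - p i)| ≤ B := Finset.abs_sum_le_sum_abs _ _
      have heq1 : k * x - 1 = (∑ i ∈ S, (x - p i)) - A := by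
        rw [Finset.sum_sub_distrib, Finset.sum_const, nsmul_eq_mul]
        rw [hkdef]
        linarith [hsumS]
      have hkx : |k * x - 1| ≤ B + A := by
        rw [heq1]
        rw [abs_le] at habsum ⊢
        constructor <;> linarith [habsum.1, habsum.2]
      -- ∑_S |p i - 1/k| ≤ B + |k x - 1|
      have h2 : ∑ i ∈ S, |p i - 1/k| ≤ B + |k * x - 1| := by
        have hterm : ∀ i ∈ S, |p i - 1/k| ≤ |x - p i| + |x - 1/k| := by
          intro i _
          have h := abs_sub_le (p i) x (1/k)
          rwa [abs_sub_comm (p i) x] at h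
        calc ∑ i ∈ S, |p i - 1/k| ≤ ∑ i ∈ S, (|x - p i| + |x - 1/k|) :=
              Finset.sum_le_sum hterm
          _ = B + k * |x - 1/k| := by
              rw [Finset.sum_add_distrib, Finset.sum_const, nsmul_eq_mul, hB, hkdef]
          _ = B + |k * x - 1| := by
              have hmul : k * (x - 1/k) = k * x - 1 := by field_simp
              rw [← hmul, abs_mul, abs_of_pos hk]
      have hfarS := hfar S hSne
      rw [hsplit] at hfarS
      -- ∑ min = B + A
      have hminsum : ∑ i, min (p i) |x - p i| = B + A := by
        rw [← Finset.sum_add_sum_compl S]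
        congr 1
        · exact Finset.sum_congr rfl fun i hi => by
            have : |x - p i| ≤ p i := by simpa [hSdef] using hi
            exact min_eq_right this
        · exact Finset.sum_congr rfl fun i hi => by
            have h' : ¬ |x - p i| ≤ p i := by
              have := Finset.mem_compl.mp hi
              simpa [hSdef] using this
            exact min_eq_left (le_of_lt (lt_of_not_ge h'))
      rw [hminsum]
      nlinarith [hfarS, h2, hkx]
  -- split ∑ min over S_l and S_h
  have hsplit2 : ∑ i, min (p i) |x - p i|
      = (∑ i ∈ Finset.univ.filter fun i => p i ≤ x / 2, min (p i) |x - p i|)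
        + ∑ i ∈ Finset.univ.filter fun i => ¬ p i ≤ x / 2, min (p i) |x - p i| :=
    (Finset.sum_filter_add_sum_filter_not _ _ _).symm
  have hle1 : (∑ i ∈ Finset.univ.filter fun i => p i ≤ x / 2, min (p i) |x - p i|)
      ≤ ∑ i ∈ Finset.univ.filter fun i => p i ≤ x / 2, p i :=
    Finset.sum_le_sum fun i _ => min_le_left _ _
  have hle2 : (∑ i ∈ Finset.univ.filter fun i => ¬ p i ≤ x / 2, min (p i) |x - p i|)
      ≤ ∑ i ∈ Finset.univ.filter fun i => ¬ p i ≤ x / 2, |x - p i| :=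
    Finset.sum_le_sum fun i _ => min_le_right _ _
  have hmain : ε / 2 ≤ (∑ i ∈ Finset.univ.filter fun i => p i ≤ x / 2, p i)
      + ∑ i ∈ Finset.univ.filter fun i => ¬ p i ≤ x / 2, |x - p i| := by
    rw [hsplit2] at hkey
    linarith
  refine ⟨hmain, ?_⟩
  by_contra h
  rw [not_or, not_le, not_le] at h
  linarith [h.1, h.2]
end
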